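/- The Riordan array identity ((1-βx)/(1+αx-βγx^2), x(1-βx)/(1+αx-βγx^2)) · (1/(1-γx), x/(1-γx)) = ((1-βx)/(1+(α-γ)x), x(1-βx)/(1+(α-γ)x)) holds. Equivalently, writing f(x)=x(1-βx)/(1+αx-βγx^2), one has (1-βx)/(1+αx-βγx^2) · 1/(1-γ f(x)) = (1-βx)/(1+(α-γ)x) and f(x)/(1-γf(x)) = x(1-βx)/(1+(α-γ)x) as formal power series. -/

import Mathlib

open PowerSeries

private lemma invOfUnit_unique {R : Type*} [CommRing R] (x y : PowerSeries R)
    (h1 : constantCoeff x = 1) (h2 : x * y = 1) :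
    PowerSeries.invOfUnit x 1 = y := by
  have h3 : x * PowerSeries.invOfUnit x 1 = 1 :=
    PowerSeries.mul_invOfUnit x 1 (by simpa using h1)
  calc PowerSeries.invOfUnit x 1 = PowerSeries.invOfUnit x 1 * (x * y) := by rw [h2, mul_one]
    _ = (x * PowerSeries.invOfUnit x 1) * y := by ring
    _ = y := by rw [h3, one_mul]

/-- Riordan array identity
`((1-βx)/(1+αx-βγx²), x(1-βx)/(1+αx-βγx²)) · (1/(1-γx), x/(1-γx))
  = ((1-βx)/(1+(α-γ)x), x(1-βx)/(1+(α-γ)x))`: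
with `f(x) = x(1-βx)/(1+αx-βγx²)`, one has
`(1-βx)/(1+αx-βγx²) · 1/(1-γf(x)) = (1-βx)/(1+(α-γ)x)` and
`f(x)/(1-γf(x)) = x(1-βx)/(1+(α-γ)x)`. -/
theorem generalized_riordan_shift {R : Type*} [CommRing R] (α β γ : R)
    (f : PowerSeries R)
    (hf : f = PowerSeries.X * (1 - PowerSeries.C β * PowerSeries.X) *
      PowerSeries.invOfUnit
        (1 + PowerSeries.C α * PowerSeries.X
           - PowerSeries.C (β * γ) * PowerSeries.X ^ 2) 1) :
    ((1 - PowerSeries.C β * PowerSeries.X) *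
        PowerSeries.invOfUnit
          (1 + PowerSeries.C α * PowerSeries.X
             - PowerSeries.C (β * γ) * PowerSeries.X ^ 2) 1) *
        PowerSeries.invOfUnit (1 - PowerSeries.C γ * f) 1 =
      (1 - PowerSeries.C β * PowerSeries.X) *
        PowerSeries.invOfUnit (1 + PowerSeries.C (α - γ) * PowerSeries.X) 1 ∧
    f * PowerSeries.invOfUnit (1 - PowerSeries.C γ * f) 1 =
      PowerSeries.X * (1 - PowerSeries.C β * PowerSeries.X) *
        PowerSeries.invOfUnit (1 + PowerSeries.C (α - γ) * PowerSeries.X) 1 := by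
  set A : PowerSeries R := 1 + PowerSeries.C α * PowerSeries.X
      - PowerSeries.C (β * γ) * PowerSeries.X ^ 2 with hA
  set D : PowerSeries R := 1 + PowerSeries.C (α - γ) * PowerSeries.X with hD
  set B : PowerSeries R := 1 - PowerSeries.C β * PowerSeries.X with hB
  have hAc : constantCoeff A = 1 := by simp [hA]
  have hDc : constantCoeff D = 1 := by simp [hD]
  have hAinv : A * PowerSeries.invOfUnit A 1 = 1 :=
    PowerSeries.mul_invOfUnit A 1 (by simpa using hAc)
  have hDinv : D * PowerSeries.invOfUnit D 1 = 1 :=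
    PowerSeries.mul_invOfUnit D 1 (by simpa using hDc)
  -- A - γ X B = D
  have key : A - PowerSeries.C γ * PowerSeries.X * B = D := by
    simp only [hA, hB, hD, map_sub, map_mul]
    ring
  have hfc : constantCoeff f = 0 := by
    rw [hf]; simp
  have hGc : constantCoeff (1 - PowerSeries.C γ * f) = 1 := by
    simp [hfc]
  -- 1 - γ f = D * A⁻¹
  have hG : 1 - PowerSeries.C γ * f = D * PowerSeries.invOfUnit A 1 := by
    rw [hf]
    calc 1 - PowerSeries.C γ * (PowerSeries.X * B * PowerSeries.invOfUnit A 1)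
        = (A - PowerSeries.C γ * PowerSeries.X * B) * PowerSeries.invOfUnit A 1
          + (1 - A * PowerSeries.invOfUnit A 1) := by ring
      _ = D * PowerSeries.invOfUnit A 1 := by rw [key, hAinv]; ring
  have hGinv : PowerSeries.invOfUnit (1 - PowerSeries.C γ * f) 1
      = A * PowerSeries.invOfUnit D 1 := by
    apply invOfUnit_unique _ _ hGc
    rw [hG]
    calc D * PowerSeries.invOfUnit A 1 * (A * PowerSeries.invOfUnit D 1)
        = (D * PowerSeries.invOfUnit D 1) * (A * PowerSeries.invOfUnit A 1) := by ring
      _ = 1 := by rw [hAinv, hDinv, mul_one]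
  constructor
  · rw [hGinv]
    calc B * PowerSeries.invOfUnit A 1 * (A * PowerSeries.invOfUnit D 1)
        = (A * PowerSeries.invOfUnit A 1) * (B * PowerSeries.invOfUnit D 1) := by ring
      _ = B * PowerSeries.invOfUnit D 1 := by rw [hAinv, one_mul]
  · rw [hGinv, hf]
    calc PowerSeries.X * B * PowerSeries.invOfUnit A 1 * (A * PowerSeries.invOfUnit D 1)
        = (A * PowerSeries.invOfUnit A 1) * (PowerSeries.X * B * PowerSeries.invOfUnit D 1) := by
          ring
      _ = PowerSeries.X * B * PowerSeries.invOfUnit D 1 := by rw [hAinv, one_mul]
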